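/- Let a ∈ ℝ, V : [a,∞) → ℝ continuous, E ∈ ℝ, and suppose liminf_{x→∞}(V(x) − E) > 0. Let ψ : [a,∞) → ℝ be twice continuously differentiable, square-integrable on [a,∞), and satisfy −ψ''(x) + V(x)ψ(x) = Eψ(x) for all x ≥ a. Then for every δ with 0 < δ < liminf_{x→∞}(V(x) − E), setting ρ(x) := ∫_a^x ( max(V(t) − E − δ, 0) )^{1/2} dt, the function x ↦ e^{ρ(x)}ψ(x) is bounded on [a,∞), and both e^{ρ}ψ and its derivative are square-integrable on [a,∞). -/

import Mathlib

open MeasureTheory Set Filter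

/-- Half-line case of Theorem 1.2: for an `L²` solution `ψ` of `−ψ'' + Vψ = Eψ` on
`[a,∞)` and any `δ` with `0 < δ < liminf_{x→∞}(V(x) − E)` (the condition
`δ < liminf (V − E)` is expressed as: there is `m > δ` with `V x − E ≥ m` eventually),
setting `ρ(x) = ∫_a^x ((V(t) − E − δ)₊)^{1/2} dt`, the function `e^ρ ψ` is bounded and
both it and its derivative are square-integrable on `[a,∞)`. -/
theorem agmon_classical_action_halfline (a : ℝ) (V : ℝ → ℝ)
    (hV : ContinuousOn V (Set.Ici a)) (E : ℝ)
    (ψ : ℝ → ℝ) (hψC2 : ContDiffOn ℝ 2 ψ (Set.Ici a))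
    (hψL2 : IntegrableOn (fun x => (ψ x) ^ 2) (Set.Ici a))
    (heq : ∀ x ≥ a, -(deriv (deriv ψ) x) + V x * ψ x = E * ψ x)
    (δ : ℝ) (hδ : 0 < δ)
    (hδliminf : ∃ m, δ < m ∧ ∀ᶠ x in Filter.atTop, m ≤ V x - E)
    (ρ : ℝ → ℝ)
    (hρ : ρ = fun x => ∫ t in a..x, Real.sqrt (max (V t - E - δ) 0)) :
    (∃ C : ℝ, ∀ x ≥ a, |Real.exp (ρ x) * ψ x| ≤ C) ∧
    IntegrableOn (fun x => (Real.exp (ρ x) * ψ x) ^ 2) (Set.Ici a) ∧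
    IntegrableOn (fun x => (deriv (fun y => Real.exp (ρ y) * ψ y) x) ^ 2)
      (Set.Ici a) := by
  obtain ⟨m, hδm, hev⟩ := hδliminf
  obtain ⟨b₀, hb₀⟩ := eventually_atTop.1 hev
  set b : ℝ := max (a + 1) b₀ with hbdef
  have hab : a < b := lt_of_lt_of_le (by linarith) (le_max_left _ _)
  have hbge : ∀ x, b ≤ x → m ≤ V x - E := fun x hx => hb₀ x (le_trans (le_max_right _ _) hx)
  have hm0 : 0 < m := hδ.trans hδm
  set q : ℝ → ℝ := fun t => Real.sqrt (max (V t - E - δ) 0) with hqdef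
  have hq0 : ∀ t, 0 ≤ q t := fun t => Real.sqrt_nonneg _
  have hqcont : ContinuousOn q (Ici a) :=
    Real.continuous_sqrt.comp_continuousOn
      (((hV.sub continuousOn_const).sub continuousOn_const).sup continuousOn_const)
  have hqcontIoi : ContinuousOn q (Ioi a) := hqcont.mono Ioi_subset_Ici_self
  have hq2 : ∀ x, b ≤ x → q x ^ 2 = V x - E - δ := by
    intro x hx
    have h1 : 0 ≤ V x - E - δ := by have := hbge x hx; linarith
    simp only [hqdef]
    rw [max_eq_left h1, Real.sq_sqrt h1]
  -- derivative of ρ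
  have hρd : ∀ x ∈ Ioi a, HasDerivAt ρ (q x) x := by
    intro x hx
    rw [hρ]
    have hsub : uIcc a x ⊆ Ici a := by
      rw [uIcc_of_le (le_of_lt hx)]; exact Icc_subset_Ici_self
    have hint : IntervalIntegrable q volume a x :=
      (hqcont.mono hsub).intervalIntegrable
    exact intervalIntegral.integral_hasDerivAt_right hint
      (hqcontIoi.stronglyMeasurableAtFilter isOpen_Ioi x hx)
      ((hqcont x (Ioi_subset_Ici_self hx)).continuousAt (Ici_mem_nhds hx))
  have hρcont : ContinuousOn ρ (Ioi a) := fun x hx =>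
    (hρd x hx).continuousAt.continuousWithinAt
  have hρmono : MonotoneOn ρ (Ici a) := by
    intro x hx y hy hxy
    rw [hρ]
    simp only
    have h1 : IntervalIntegrable q volume a x := by
      apply ContinuousOn.intervalIntegrable
      apply hqcont.mono; rw [uIcc_of_le hx]; exact Icc_subset_Ici_self
    have h2 : IntervalIntegrable q volume a y := by
      apply ContinuousOn.intervalIntegrable
      apply hqcont.mono; rw [uIcc_of_le hy]; exact Icc_subset_Ici_self
    have h3 : (∫ t in a..y, q t) - ∫ t in a..x, q t = ∫ t in x..y, q t :=
      intervalIntegral.integral_interval_sub_left h2 h1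
    have h4 : 0 ≤ ∫ t in x..y, q t :=
      intervalIntegral.integral_nonneg hxy (fun t _ => hq0 t)
    linarith
  -- ψ derivatives
  have hψC2' : ContDiffOn ℝ 2 ψ (Ioi a) := hψC2.mono Ioi_subset_Ici_self
  have hψ'C1 : ContDiffOn ℝ 1 (deriv ψ) (Ioi a) :=
    hψC2'.deriv_of_isOpen isOpen_Ioi (by norm_num)
  have hψd : ∀ x ∈ Ioi a, HasDerivAt ψ (deriv ψ x) x := by
    intro x hx
    exact ((hψC2'.differentiableOn (by norm_num)).differentiableAt
      (isOpen_Ioi.mem_nhds hx)).hasDerivAt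
  have hψ'd : ∀ x ∈ Ioi a, HasDerivAt (deriv ψ) ((V x - E) * ψ x) x := by
    intro x hx
    have h1 : DifferentiableAt ℝ (deriv ψ) x :=
      (hψ'C1.differentiableOn (by norm_num)).differentiableAt (isOpen_Ioi.mem_nhds hx)
    have h2 : deriv (deriv ψ) x = (V x - E) * ψ x := by
      have h := heq x (le_of_lt hx); linear_combination -h
    rw [← h2]; exact h1.hasDerivAt
  have hψcont : ContinuousOn ψ (Ici a) := hψC2.continuousOn
  have hψ'cont : ContinuousOn (deriv ψ) (Ioi a) := hψ'C1.continuousOn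
  -- continuous extension of deriv ψ to Ici a
  set ψ₁ : ℝ → ℝ := fun x => derivWithin ψ (Ici a) x with hψ₁def
  have hψ₁cont : ContinuousOn ψ₁ (Ici a) :=
    hψC2.continuousOn_derivWithin (uniqueDiffOn_Ici a) (by norm_num)
  have hψ₁eq : ∀ x ∈ Ioi a, deriv ψ x = ψ₁ x := fun x hx =>
    (derivWithin_of_mem_nhds (Ici_mem_nhds hx)).symm
  -- Φ and its derivative
  set Φ : ℝ → ℝ := fun x => Real.exp (ρ x) * ψ x with hΦdef
  set Φ' : ℝ → ℝ := fun x => Real.exp (ρ x) * (deriv ψ x + q x * ψ x) with hΦ'def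
  have hΦd : ∀ x ∈ Ioi a, HasDerivAt Φ (Φ' x) x := by
    intro x hx
    have h1 := ((hρd x hx).exp).mul (hψd x hx)
    refine h1.congr_deriv ?_
    simp only [hΦ'def]; ring
  have hΦcont : ContinuousOn Φ (Ioi a) := fun x hx =>
    (hΦd x hx).continuousAt.continuousWithinAt
  have hΦ'cont : ContinuousOn Φ' (Ioi a) :=
    ((hρcont.rexp).mul ((hψ'cont.add (hqcontIoi.mul
      (hψcont.mono Ioi_subset_Ici_self)))))
  -- G and its derivative
  set G : ℝ → ℝ := fun x => Real.exp (2 * ρ x) * (ψ x * deriv ψ x) with hGdef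
  have hGd : ∀ x ∈ Ioi a, HasDerivAt G
      (Real.exp (2 * ρ x) *
        (deriv ψ x ^ 2 + 2 * q x * (ψ x * deriv ψ x) + (V x - E) * ψ x ^ 2)) x := by
    intro x hx
    have h1 := (((hρd x hx).const_mul (2 : ℝ)).exp).mul ((hψd x hx).mul (hψ'd x hx))
    refine h1.congr_deriv ?_
    simp only [Pi.mul_apply]
    ring
  have hGkey : ∀ x, b ≤ x →
      Real.exp (2 * ρ x) *
        (deriv ψ x ^ 2 + 2 * q x * (ψ x * deriv ψ x) + (V x - E) * ψ x ^ 2)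
      = Φ' x ^ 2 + δ * Φ x ^ 2 := by
    intro x hx
    have h2 := hq2 x hx
    have hexp : Real.exp (2 * ρ x) = Real.exp (ρ x) ^ 2 := by
      rw [← Real.exp_nat_mul]; norm_num [mul_comm]
    simp only [hΦ'def, hΦdef]
    rw [hexp]
    linear_combination (-(Real.exp (ρ x)) ^ 2 * ψ x ^ 2) * h2
  -- p = ψ ψ' is monotone on [b, ∞) and nonpositive there
  set p : ℝ → ℝ := fun x => ψ x * deriv ψ x with hpdef
  have hpd : ∀ x ∈ Ioi a, HasDerivAt p (deriv ψ x ^ 2 + (V x - E) * ψ x ^ 2) x := by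
    intro x hx
    have h1 := (hψd x hx).mul (hψ'd x hx)
    refine h1.congr_deriv ?_; ring
  have hpcont : ContinuousOn p (Ici b) := fun x hx =>
    (hpd x (lt_of_lt_of_le hab hx)).continuousAt.continuousWithinAt
  have hpmono : MonotoneOn p (Ici b) := by
    apply monotoneOn_of_deriv_nonneg (convex_Ici b) hpcont
    · intro x hx
      rw [interior_Ici] at hx
      exact ((hpd x (hab.trans hx)).differentiableAt).differentiableWithinAt
    · intro x hx
      rw [interior_Ici] at hx
      rw [(hpd x (hab.trans hx)).deriv]
      have h1 := hbge x (le_of_lt hx)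
      nlinarith [sq_nonneg (deriv ψ x), sq_nonneg (ψ x)]
  have hple : ∀ x, b ≤ x → p x ≤ 0 := by
    intro x₀ hx₀
    by_contra hc
    push_neg at hc
    set c : ℝ := p x₀ with hcdef
    have hc0 : 0 < c := hc
    -- u = ψ² grows at least linearly beyond x₀
    have hud : ∀ x ∈ Ioi a, HasDerivAt (fun y => ψ y ^ 2) (2 * p x) x := by
      intro x hx
      have h1 := (hψd x hx).mul (hψd x hx)
      refine (h1.congr_deriv ?_).congr_of_eventuallyEq (Filter.Eventually.of_forall fun y => ?_)
      · show _ = 2 * (ψ x * deriv ψ x)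
        ring
      · show ψ y ^ 2 = ψ y * ψ y
        ring
    have hax₀ : a < x₀ := lt_of_lt_of_le hab hx₀
    set w : ℝ → ℝ := fun y => ψ y ^ 2 - 2 * c * (y - x₀) with hwdef
    have hwmono : MonotoneOn w (Ici x₀) := by
      apply monotoneOn_of_deriv_nonneg (convex_Ici x₀)
      · intro y hy
        have hlin : HasDerivAt (fun z : ℝ => 2 * c * (z - x₀)) (2 * c) y := by
          simpa using ((hasDerivAt_id y).sub_const x₀).const_mul (2*c)
        exact (((hud y (hax₀.trans_le hy)).sub hlin).continuousAt).continuousWithinAt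
      · intro y hy
        rw [interior_Ici] at hy
        have hlin : HasDerivAt (fun z : ℝ => 2 * c * (z - x₀)) (2 * c) y := by
          simpa using ((hasDerivAt_id y).sub_const x₀).const_mul (2*c)
        exact (((hud y (hax₀.trans hy)).sub hlin).differentiableAt).differentiableWithinAt
      · intro y hy
        rw [interior_Ici] at hy
        have hlin : HasDerivAt (fun z : ℝ => 2 * c * (z - x₀)) (2 * c) y := by
          simpa using ((hasDerivAt_id y).sub_const x₀).const_mul (2*c)
        have hd := (hud y (hax₀.trans hy)).sub hlin
        rw [hwdef, show (fun y => ψ y ^ 2 - 2 * c * (y - x₀)) = (fun y => ψ y ^ 2) - (fun z => 2 * c * (z - x₀)) from rfl, hd.deriv]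
        have h1 : c ≤ p y := by
          rw [hcdef]
          exact hpmono hx₀ (hx₀.trans (le_of_lt hy)) (le_of_lt hy)
        linarith
    have hgrow : ∀ y, x₀ ≤ y → 2 * c * (y - x₀) ≤ ψ y ^ 2 := by
      intro y hy
      have h1 := hwmono (self_mem_Ici) hy hy
      simp only [hwdef] at h1
      nlinarith [sq_nonneg (ψ x₀)]
    set x₁ : ℝ := x₀ + 1 / (2 * c) with hx₁def
    have hx₁ : x₀ ≤ x₁ := by
      rw [hx₁def]; have : 0 < 1 / (2 * c) := by positivity
      linarith
    have hone : ∀ y, x₁ ≤ y → (1:ℝ) ≤ ψ y ^ 2 := by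
      intro y hy
      have h1 := hgrow y (hx₁.trans hy)
      have h2 : 1 / (2 * c) ≤ y - x₀ := by rw [hx₁def] at hy; linarith
      have h3 : (1:ℝ) = 2 * c * (1 / (2*c)) := by field_simp
      nlinarith
    have hint1 : IntegrableOn (fun _ : ℝ => (1:ℝ)) (Ici x₁) volume := by
      apply Integrable.mono' (hψL2.mono_set (Ici_subset_Ici.mpr (le_trans (le_of_lt hax₀) hx₁)))
        aestronglyMeasurable_const
      exact ae_restrict_of_forall_mem measurableSet_Ici
        (fun y hy => by simpa using hone y hy)
    rw [integrableOn_const_iff] at hint1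
    rcases hint1 with h | h
    · norm_num at h
    · rw [Real.volume_Ici] at h; exact (lt_irrefl _ h).elim
  have hGle : ∀ x, b ≤ x → G x ≤ 0 := by
    intro x hx
    simp only [hGdef]
    exact mul_nonpos_of_nonneg_of_nonpos (le_of_lt (Real.exp_pos _)) (hple x hx)
  -- FTC bounds
  set M : ℝ := -G b with hMdef
  have hM0 : 0 ≤ M := by have := hGle b le_rfl; rw [hMdef]; linarith
  have hIci_sub : Ici b ⊆ Ioi a := fun x hx => lt_of_lt_of_le hab hx
  have hΦcontb : ContinuousOn Φ (Ici b) := hΦcont.mono hIci_sub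
  have hΦ'contb : ContinuousOn Φ' (Ici b) := hΦ'cont.mono hIci_sub
  have hcontF : ContinuousOn (fun t => Φ' t ^ 2 + δ * Φ t ^ 2) (Ici b) :=
    (hΦ'contb.pow 2).add ((hΦcontb.pow 2).const_smul δ)
  have hcont1 : ContinuousOn (fun t => Φ' t ^ 2) (Ici b) := hΦ'contb.pow 2
  have hcont2 : ContinuousOn (fun t => Φ t ^ 2) (Ici b) := hΦcontb.pow 2
  have hsubI : ∀ x, b ≤ x → uIcc b x ⊆ Ici b := by
    intro x hx; rw [uIcc_of_le hx]; exact Icc_subset_Ici_self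
  have hintF : ∀ x, b ≤ x → IntervalIntegrable (fun t => Φ' t ^ 2 + δ * Φ t ^ 2) volume b x :=
    fun x hx => (hcontF.mono (hsubI x hx)).intervalIntegrable
  have hint1 : ∀ x, b ≤ x → IntervalIntegrable (fun t => Φ' t ^ 2) volume b x :=
    fun x hx => (hcont1.mono (hsubI x hx)).intervalIntegrable
  have hint2 : ∀ x, b ≤ x → IntervalIntegrable (fun t => Φ t ^ 2) volume b x :=
    fun x hx => (hcont2.mono (hsubI x hx)).intervalIntegrable
  have hFTC : ∀ x, b ≤ x → (∫ t in b..x, (Φ' t ^ 2 + δ * Φ t ^ 2)) = G x - G b := by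
    intro x hx
    apply intervalIntegral.integral_eq_sub_of_hasDerivAt
    · intro t ht
      have htb : b ≤ t := (hsubI x hx ht)
      have h1 := hGd t (hIci_sub htb)
      rw [hGkey t htb] at h1
      exact h1
    · exact hintF x hx
  have hboundF : ∀ x, b ≤ x → (∫ t in b..x, (Φ' t ^ 2 + δ * Φ t ^ 2)) ≤ M := by
    intro x hx
    rw [hFTC x hx]
    have := hGle x hx
    rw [hMdef]; linarith
  have hbound1 : ∀ x, b ≤ x → (∫ t in b..x, Φ' t ^ 2) ≤ M := by
    intro x hx
    have h1 : (∫ t in b..x, Φ' t ^ 2) ≤ ∫ t in b..x, (Φ' t ^ 2 + δ * Φ t ^ 2) := by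
      apply intervalIntegral.integral_mono_on hx (hint1 x hx) (hintF x hx)
      intro t _
      have : 0 ≤ δ * Φ t ^ 2 := by positivity
      linarith
    linarith [hboundF x hx]
  have hbound2 : ∀ x, b ≤ x → (∫ t in b..x, Φ t ^ 2) ≤ M / δ := by
    intro x hx
    have h1 : (∫ t in b..x, δ * Φ t ^ 2) ≤ ∫ t in b..x, (Φ' t ^ 2 + δ * Φ t ^ 2) := by
      apply intervalIntegral.integral_mono_on hx ((hint2 x hx).const_mul δ) (hintF x hx)
      intro t _
      have : 0 ≤ Φ' t ^ 2 := sq_nonneg _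
      linarith
    rw [intervalIntegral.integral_const_mul] at h1
    rw [le_div_iff₀ hδ]
    have := hboundF x hx
    linarith [mul_comm δ (∫ t in b..x, Φ t ^ 2)]
  -- boundedness of Φ on [b, ∞)
  have hΦsq : ∀ x, b ≤ x → Φ x ^ 2 ≤ Φ b ^ 2 + (M + M / δ) := by
    intro x hx
    have hFTC2 : (∫ t in b..x, 2 * Φ t * Φ' t) = Φ x ^ 2 - Φ b ^ 2 := by
      apply intervalIntegral.integral_eq_sub_of_hasDerivAt
      · intro t ht
        have htb := hIci_sub (hsubI x hx ht)
        have h1 := (hΦd t htb).mul (hΦd t htb)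
        refine (h1.congr_deriv ?_).congr_of_eventuallyEq (Filter.Eventually.of_forall fun y => ?_)
        · ring
        · show _ = Φ y * Φ y
          beta_reduce; ring
      · exact ((((continuousOn_const.mul hΦcontb).mul hΦ'contb).mono (hsubI x hx)).intervalIntegrable)
    have h2 : (∫ t in b..x, 2 * Φ t * Φ' t) ≤ ∫ t in b..x, (Φ' t ^ 2 + Φ t ^ 2) := by
      apply intervalIntegral.integral_mono_on hx
        (((((continuousOn_const.mul hΦcontb).mul hΦ'contb).mono (hsubI x hx)).intervalIntegrable))
        ((hint1 x hx).add (hint2 x hx))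
      intro t _
      show 2 * Φ t * Φ' t ≤ _
      nlinarith [sq_nonneg (Φ t - Φ' t)]
    have h3 : (∫ t in b..x, (Φ' t ^ 2 + Φ t ^ 2)) =
        (∫ t in b..x, Φ' t ^ 2) + ∫ t in b..x, Φ t ^ 2 :=
      intervalIntegral.integral_add (hint1 x hx) (hint2 x hx)
    have h4 := hbound1 x hx
    have h5 := hbound2 x hx
    linarith
  -- global bound for Φ
  obtain ⟨S, hS⟩ := (isCompact_Icc (a := a) (b := b)).exists_bound_of_continuousOn
    (hψcont.mono Icc_subset_Ici_self)
  have hS0 : 0 ≤ S := le_trans (norm_nonneg _) (hS a (left_mem_Icc.mpr hab.le))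
  set C₁ : ℝ := Real.sqrt (Φ b ^ 2 + (M + M / δ)) with hC₁def
  set C₂ : ℝ := Real.exp (ρ b) * S with hC₂def
  have hΦbd : ∀ x ≥ a, |Φ x| ≤ max C₁ C₂ := by
    intro x hx
    rcases le_total x b with hxb | hbx
    · refine le_trans ?_ (le_max_right _ _)
      have h1 : ρ x ≤ ρ b := hρmono hx (hab.le.trans le_rfl) hxb
      have h2 : |ψ x| ≤ S := by
        have := hS x ⟨hx, hxb⟩; rwa [Real.norm_eq_abs] at this
      rw [hΦdef]
      simp only
      rw [abs_mul, abs_of_pos (Real.exp_pos _)]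
      rw [hC₂def]
      exact mul_le_mul (Real.exp_le_exp.mpr h1) h2 (abs_nonneg _) (Real.exp_pos _).le
    · refine le_trans ?_ (le_max_left _ _)
      have h1 : Φ x ^ 2 ≤ Φ b ^ 2 + (M + M / δ) := hΦsq x hbx
      rw [hC₁def, ← Real.sqrt_sq_eq_abs]
      exact Real.sqrt_le_sqrt h1
  -- integrability of Φ² on Ici a
  have htend : Tendsto (fun i : ℕ => b + (i : ℝ)) atTop atTop :=
    tendsto_atTop_add_const_left atTop b tendsto_natCast_atTop_atTop
  have hIocIoi : Ioc a b ∪ Ioi b = Ioi a := Ioc_union_Ioi_eq_Ioi hab.le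
  have hΦsqIoi : IntegrableOn (fun t => Φ t ^ 2) (Ioi b) volume := by
    apply MeasureTheory.integrableOn_Ioi_of_intervalIntegral_norm_bounded (M / δ) b
      (b := fun i : ℕ => b + (i : ℝ)) ?_ htend ?_
    · intro i
      have hbi : b ≤ b + (i : ℝ) := le_add_of_nonneg_right (Nat.cast_nonneg i)
      have : ContinuousOn (fun t => Φ t ^ 2) (Icc b (b + (i:ℝ))) :=
        hcont2.mono Icc_subset_Ici_self
      exact (this.integrableOn_Icc).mono_set Ioc_subset_Icc_self
    · filter_upwards with i
      have hbi : b ≤ b + (i : ℝ) := le_add_of_nonneg_right (Nat.cast_nonneg i)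
      have heqn : (∫ t in b..(b + (i:ℝ)), ‖Φ t ^ 2‖) = ∫ t in b..(b + (i:ℝ)), Φ t ^ 2 := by
        apply intervalIntegral.integral_congr
        intro t _
        simp [Real.norm_eq_abs, abs_pow, sq_abs]
      rw [heqn]
      exact hbound2 _ hbi
  have hΦsqIoc : IntegrableOn (fun t => Φ t ^ 2) (Ioc a b) volume := by
    have hmble : AEStronglyMeasurable (fun t => Φ t ^ 2) (volume.restrict (Ioc a b)) :=
      ((hΦcont.mono Ioc_subset_Ioi_self).pow 2).aestronglyMeasurable measurableSet_Ioc
    have hbdd : ∀ᵐ t ∂(volume.restrict (Ioc a b)), ‖Φ t ^ 2‖ ≤ C₂ ^ 2 := by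
      apply ae_restrict_of_forall_mem measurableSet_Ioc
      intro t ht
      have h1 : |Φ t| ≤ C₂ := by
        have h2 : ρ t ≤ ρ b := hρmono ht.1.le hab.le ht.2
        have h3 : |ψ t| ≤ S := by
          have := hS t ⟨ht.1.le, ht.2⟩; rwa [Real.norm_eq_abs] at this
        rw [hΦdef]; simp only
        rw [abs_mul, abs_of_pos (Real.exp_pos _), hC₂def]
        exact mul_le_mul (Real.exp_le_exp.mpr h2) h3 (abs_nonneg _) (Real.exp_pos _).le
      rw [Real.norm_eq_abs, abs_pow]
      exact pow_le_pow_left₀ (abs_nonneg _) h1 2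
    exact ⟨hmble, HasFiniteIntegral.restrict_of_bounded (C := C₂ ^ 2)
      measure_Ioc_lt_top hbdd⟩
  have hΦsqint : IntegrableOn (fun x => Φ x ^ 2) (Ici a) volume := by
    rw [integrableOn_Ici_iff_integrableOn_Ioi, ← hIocIoi]
    exact hΦsqIoc.union hΦsqIoi
  -- integrability of Φ'² on Ioi a
  obtain ⟨K, hK⟩ := (isCompact_Icc (a := a) (b := b)).exists_bound_of_continuousOn
    (((hψ₁cont.add (hqcont.mul hψcont))).mono Icc_subset_Ici_self)
  have hΦ'sqIoi : IntegrableOn (fun t => Φ' t ^ 2) (Ioi b) volume := by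
    apply MeasureTheory.integrableOn_Ioi_of_intervalIntegral_norm_bounded M b
      (b := fun i : ℕ => b + (i : ℝ)) ?_ htend ?_
    · intro i
      have : ContinuousOn (fun t => Φ' t ^ 2) (Icc b (b + (i:ℝ))) :=
        hcont1.mono Icc_subset_Ici_self
      exact (this.integrableOn_Icc).mono_set Ioc_subset_Icc_self
    · filter_upwards with i
      have hbi : b ≤ b + (i : ℝ) := le_add_of_nonneg_right (Nat.cast_nonneg i)
      have heqn : (∫ t in b..(b + (i:ℝ)), ‖Φ' t ^ 2‖) = ∫ t in b..(b + (i:ℝ)), Φ' t ^ 2 := by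
        apply intervalIntegral.integral_congr
        intro t _
        simp [Real.norm_eq_abs, abs_pow, sq_abs]
      rw [heqn]
      exact hbound1 _ hbi
  have hΦ'sqIoc : IntegrableOn (fun t => Φ' t ^ 2) (Ioc a b) volume := by
    have hmble : AEStronglyMeasurable (fun t => Φ' t ^ 2) (volume.restrict (Ioc a b)) :=
      ((hΦ'cont.mono Ioc_subset_Ioi_self).pow 2).aestronglyMeasurable measurableSet_Ioc
    have hbdd : ∀ᵐ t ∂(volume.restrict (Ioc a b)),
        ‖Φ' t ^ 2‖ ≤ (Real.exp (ρ b) * K) ^ 2 := by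
      apply ae_restrict_of_forall_mem measurableSet_Ioc
      intro t ht
      have h1 : |Φ' t| ≤ Real.exp (ρ b) * K := by
        have h2 : ρ t ≤ ρ b := hρmono ht.1.le hab.le ht.2
        have h3 : |ψ₁ t + q t * ψ t| ≤ K := by
          have := hK t ⟨ht.1.le, ht.2⟩; rwa [Real.norm_eq_abs] at this
        have h4 : deriv ψ t = ψ₁ t := hψ₁eq t ht.1
        rw [hΦ'def]; simp only
        rw [h4, abs_mul, abs_of_pos (Real.exp_pos _)]
        exact mul_le_mul (Real.exp_le_exp.mpr h2) h3 (abs_nonneg _) (Real.exp_pos _).le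
      rw [Real.norm_eq_abs, abs_pow]
      exact pow_le_pow_left₀ (abs_nonneg _) h1 2
    exact ⟨hmble, HasFiniteIntegral.restrict_of_bounded (C := (Real.exp (ρ b) * K) ^ 2)
      measure_Ioc_lt_top hbdd⟩
  have hΦ'sqint : IntegrableOn (fun x => Φ' x ^ 2) (Ioi a) volume := by
    rw [← hIocIoi]
    exact hΦ'sqIoc.union hΦ'sqIoi
  have hderivint : IntegrableOn (fun x => (deriv Φ x) ^ 2) (Set.Ici a) volume := by
    rw [integrableOn_Ici_iff_integrableOn_Ioi]
    apply hΦ'sqint.congr_fun _ measurableSet_Ioi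
    intro x hx
    simp only
    rw [(hΦd x hx).deriv]
  exact ⟨⟨max C₁ C₂, hΦbd⟩, hΦsqint, hderivint⟩
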